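/- Let G be a finite group and let M be a proper subgroup of G with N_G(M) = M. Let g ∈ M and suppose that g^G ∩ M = g^M, i.e. the G-conjugates of g lying in M form a single M-conjugacy class. Then the number of G-conjugates L of M with g ∈ L equals |C_G(g)| / |C_M(g)|. -/

import Mathlib

private lemma mem_conj_map_iff {G : Type*} [Group G] (M : Subgroup G) (x y : G) :
    y ∈ M.map (MulAut.conj x).toMonoidHom ↔ x⁻¹ * y * x ∈ M := by
  rw [Subgroup.mem_map]
  constructor
  · rintro ⟨m, hm, rfl⟩
    simpa [MulAut.conj_apply, mul_assoc] using hm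
  · intro h
    exact ⟨x⁻¹ * y * x, h, by simp [MulAut.conj_apply]; group⟩

/-- Lemma: if `M` is a proper self-normalizing subgroup of a finite group `G`, `g ∈ M`, and
the `G`-conjugates of `g` lying in `M` form a single `M`-conjugacy class, then the number of
`G`-conjugates of `M` containing `g` equals `|C_G(g)| / |C_M(g)|`. -/
theorem count_conjugate_subgroups_containing_element
    {G : Type*} [Group G] [Finite G]
    (M : Subgroup G) (hM : M ≠ ⊤) (hNorm : Subgroup.normalizer (M : Set G) = M)
    (g : G) (hg : g ∈ M)
    (hclass : ∀ x : G, x * g * x⁻¹ ∈ M → ∃ m ∈ M, x * g * x⁻¹ = m * g * m⁻¹) :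
    (Nat.card ↥{L : Subgroup G |
        (∃ x : G, ∀ y : G, y ∈ L ↔ ∃ m ∈ M, y = x * m * x⁻¹) ∧ g ∈ L} : ℝ) =
      (Nat.card ↥{x : G | x * g = g * x} : ℝ) /
        (Nat.card ↥{x : G | x ∈ M ∧ x * g = g * x} : ℝ) := by
  classical
  set S : Set (Subgroup G) :=
    {L : Subgroup G | (∃ x : G, ∀ y : G, y ∈ L ↔ ∃ m ∈ M, y = x * m * x⁻¹) ∧ g ∈ L} with hS
  set C : Subgroup G := Subgroup.centralizer {g} with hC
  have memC : ∀ x : G, x ∈ C ↔ x * g = g * x := by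
    intro x
    rw [hC, Subgroup.mem_centralizer_iff]
    simp [eq_comm]
  set H : Subgroup ↥C := M.comap C.subtype with hH
  -- the map from C to S
  have φS : ∀ c : ↥C, M.map (MulAut.conj (c : G)).toMonoidHom ∈ S := by
    rintro ⟨c, hc⟩
    rw [memC] at hc
    constructor
    · refine ⟨c, fun y => ?_⟩
      rw [mem_conj_map_iff]
      constructor
      · intro h
        exact ⟨c⁻¹ * y * c, h, by group⟩
      · rintro ⟨m, hm, rfl⟩
        simpa [mul_assoc] using hm
    · rw [mem_conj_map_iff]
      have : c⁻¹ * g * c = g := by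
        rw [mul_assoc, ← hc]; group
      rwa [this]
  set φ : ↥C → ↥S := fun c => ⟨M.map (MulAut.conj (c : G)).toMonoidHom, φS c⟩ with hφ
  -- φ descends to the quotient by H
  have hresp : ∀ a b : ↥C, (QuotientGroup.leftRel H) a b → φ a = φ b := by
    rintro ⟨a, ha⟩ ⟨b, hb⟩ hab
    rw [QuotientGroup.leftRel_apply] at hab
    have hm : a⁻¹ * b ∈ M := hab
    ext y
    simp only [hφ]
    rw [mem_conj_map_iff, mem_conj_map_iff]
    constructor
    · intro h
      have : b⁻¹ * y * b = (a⁻¹ * b)⁻¹ * (a⁻¹ * y * a) * (a⁻¹ * b) := by group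
      rw [this]
      exact M.mul_mem (M.mul_mem (M.inv_mem hm) h) hm
    · intro h
      have : a⁻¹ * y * a = (a⁻¹ * b) * (b⁻¹ * y * b) * (a⁻¹ * b)⁻¹ := by group
      rw [this]
      exact M.mul_mem (M.mul_mem hm h) (M.inv_mem hm)
  set ψ : (↥C ⧸ H) → ↥S := Quotient.lift φ hresp with hψ
  have hinj : Function.Injective ψ := by
    intro q₁ q₂
    refine Quotient.inductionOn₂ q₁ q₂ ?_
    rintro ⟨a, ha⟩ ⟨b, hb⟩ h
    have h' : M.map (MulAut.conj a).toMonoidHom = M.map (MulAut.conj b).toMonoidHom := by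
      simpa [hψ, hφ, Subtype.ext_iff] using h
    have key : ∀ y : G, a⁻¹ * y * a ∈ M ↔ b⁻¹ * y * b ∈ M := by
      intro y
      rw [← mem_conj_map_iff M a y, ← mem_conj_map_iff M b y, h']
    have hn : a⁻¹ * b ∈ Subgroup.normalizer (M : Set G) := by
      have : (a⁻¹ * b)⁻¹ ∈ Subgroup.normalizer (M : Set G) := by
        rw [Subgroup.mem_normalizer_iff]
        intro h0
        have := key (a * h0 * a⁻¹)
        constructor
        · intro hh
          have h1 : a⁻¹ * (a * h0 * a⁻¹) * a = h0 := by group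
          have h2 : b⁻¹ * (a * h0 * a⁻¹) * b = (a⁻¹ * b)⁻¹ * h0 * ((a⁻¹ * b)⁻¹)⁻¹ := by group
          rw [h1, h2] at this
          exact this.mp hh
        · intro hh
          have h1 : a⁻¹ * (a * h0 * a⁻¹) * a = h0 := by group
          have h2 : b⁻¹ * (a * h0 * a⁻¹) * b = (a⁻¹ * b)⁻¹ * h0 * ((a⁻¹ * b)⁻¹)⁻¹ := by group
          rw [h1, h2] at this
          exact this.mpr hh
      exact ((Subgroup.normalizer (M : Set G)).inv_mem_iff).mp (by simpa using this)
    rw [hNorm] at hn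
    exact Quotient.sound (QuotientGroup.leftRel_apply.mpr hn)
  have hsurj : Function.Surjective ψ := by
    rintro ⟨L, ⟨⟨x, hx⟩, hgL⟩⟩
    -- g ∈ L means x⁻¹ g x ∈ M
    have hgx : x⁻¹ * g * x ∈ M := by
      obtain ⟨m, hm, hgm⟩ := (hx g).mp hgL
      have : x⁻¹ * g * x = m := by rw [hgm]; group
      rwa [this]
    obtain ⟨m0, hm0, hconj⟩ := hclass x⁻¹ (by simpa using hgx)
    set c : G := x * m0 with hc'
    have hcC : c ∈ C := by
      rw [memC]
      have : c * g * c⁻¹ = g := by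
        have h1 : x⁻¹ * g * x⁻¹⁻¹ = m0 * g * m0⁻¹ := hconj
        calc c * g * c⁻¹ = x * (m0 * g * m0⁻¹) * x⁻¹ := by rw [hc']; group
          _ = x * (x⁻¹ * g * x⁻¹⁻¹) * x⁻¹ := by rw [h1]
          _ = g := by group
      calc c * g = (c * g * c⁻¹) * c := by group
        _ = g * c := by rw [this]
    refine ⟨QuotientGroup.mk (⟨c, hcC⟩ : ↥C), ?_⟩
    have : φ ⟨c, hcC⟩ = ⟨L, ⟨⟨x, hx⟩, hgL⟩⟩ := by
      rw [Subtype.ext_iff]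
      ext y
      simp only [hφ]
      rw [mem_conj_map_iff, hx]
      have hcy : c⁻¹ * y * c = m0⁻¹ * (x⁻¹ * y * x) * m0 := by rw [hc']; group
      constructor
      · intro h
        refine ⟨x⁻¹ * y * x, ?_, by group⟩
        have h2 : x⁻¹ * y * x = m0 * (c⁻¹ * y * c) * m0⁻¹ := by rw [hcy]; group
        rw [h2]
        exact M.mul_mem (M.mul_mem hm0 h) (M.inv_mem hm0)
      · rintro ⟨m, hm, rfl⟩
        rw [hcy]
        have h3 : x⁻¹ * (x * m * x⁻¹) * x = m := by group
        rw [h3]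
        exact M.mul_mem (M.mul_mem (M.inv_mem hm0) hm) hm0
    exact this
  have hbij : Function.Bijective ψ := ⟨hinj, hsurj⟩
  have hcardS : Nat.card ↥S = Nat.card (↥C ⧸ H) :=
    (Nat.card_congr (Equiv.ofBijective ψ hbij)).symm
  have hcardC : Nat.card ↥C = Nat.card (↥C ⧸ H) * Nat.card ↥H :=
    Subgroup.card_eq_card_quotient_mul_card_subgroup H
  have e1 : Nat.card ↥{x : G | x * g = g * x} = Nat.card ↥C :=
    Nat.card_congr (Equiv.subtypeEquivRight (fun x => (memC x).symm))
  have e2 : Nat.card ↥{x : G | x ∈ M ∧ x * g = g * x} = Nat.card ↥H := by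
    refine Nat.card_congr ?_
    refine ⟨fun p => ⟨⟨p.1, (memC p.1).mpr p.2.2⟩, p.2.1⟩,
            fun q => ⟨(q.1 : G), q.2, (memC (q.1 : G)).mp q.1.2⟩, ?_, ?_⟩
    · rintro ⟨x, hx⟩; rfl
    · rintro ⟨⟨x, hx⟩, hxH⟩; rfl
  have hpos : 0 < Nat.card ↥{x : G | x ∈ M ∧ x * g = g * x} := by
    have : Nonempty ↥{x : G | x ∈ M ∧ x * g = g * x} := ⟨⟨1, M.one_mem, by group⟩⟩
    exact Nat.card_pos
  have hne : (Nat.card ↥{x : G | x ∈ M ∧ x * g = g * x} : ℝ) ≠ 0 := by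
    exact_mod_cast hpos.ne'
  rw [e1, e2] at *
  rw [hcardS, hcardC]
  push_cast
  rw [eq_div_iff hne]
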